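/- Let (p_n) be a non-negative non-increasing real sequence with p_n → 0. If Σ_{k=1}^n k·p_k ~ n^{2-α} as n → ∞ for some 0 < α < 2, then p_n ~ (2-α)·n^{-α} as n → ∞. -/

import Mathlib

open Filter


lemma gauss_Ioc (n : ℕ) : (∑ k ∈ Finset.Ioc 0 n, (k:ℝ)) = n*(n+1)/2 := by
  induction n with
  | zero => simp
  | succ n ih =>
    rw [Finset.sum_Ioc_succ_top (Nat.zero_le _), ih]
    push_cast; ring

lemma tendsto_ratio (β : ℝ) :
    Tendsto (fun θ : ℝ => 2*(θ ^ β - 1)/(θ^2 - 1)) (nhdsWithin 1 {(1:ℝ)}ᶜ) (nhds β) := by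
  have hd : HasDerivAt (fun x : ℝ => x ^ β) (β * (1:ℝ)^(β-1)) 1 :=
    Real.hasDerivAt_rpow_const (Or.inl one_ne_zero)
  rw [hasDerivAt_iff_tendsto_slope] at hd
  have h1 : Tendsto (slope (fun x : ℝ => x ^ β) 1) (nhdsWithin 1 {(1:ℝ)}ᶜ) (nhds β) := by
    simpa using hd
  have h2 : Tendsto (fun θ:ℝ => 2/(θ+1)) (nhdsWithin 1 {(1:ℝ)}ᶜ) (nhds 1) := by
    have hc : ContinuousAt (fun θ:ℝ => 2/(θ+1)) 1 :=
      ContinuousAt.div continuousAt_const (by fun_prop) (by norm_num)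
    have := hc.tendsto.mono_left (nhdsWithin_le_nhds (s := {(1:ℝ)}ᶜ))
    norm_num at this; exact this
  have hmul := h1.mul h2
  rw [mul_one] at hmul
  refine hmul.congr' ?_
  have hmem : {θ : ℝ | 0 < θ} ∈ nhdsWithin 1 {(1:ℝ)}ᶜ :=
    nhdsWithin_le_nhds (lt_mem_nhds one_pos)
  filter_upwards [hmem, self_mem_nhdsWithin] with θ hθ0 hθ1
  have hθ1' : θ ≠ 1 := hθ1
  have h1' : θ - 1 ≠ 0 := sub_ne_zero.2 hθ1'
  have h2' : θ + 1 ≠ 0 := by positivity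
  have h3' : θ^2 - 1 ≠ 0 := by
    rw [show θ^2-1 = (θ-1)*(θ+1) by ring]; exact mul_ne_zero h1' h2'
  rw [slope_def_field, Real.one_rpow]
  field_simp
  ring

theorem stmt1 (p : ℕ → ℝ) (hnonneg : ∀ n, 0 ≤ p n) (hmono : ∀ n, p (n + 1) ≤ p n)
    (hlim : Tendsto p atTop (nhds 0))
    (α : ℝ) (hα0 : 0 < α) (hα2 : α < 2)
    (hsum : Tendsto (fun n : ℕ => (∑ k ∈ Finset.Icc 1 n, (k : ℝ) * p k) / (n : ℝ) ^ (2 - α))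
      atTop (nhds 1)) :
    Tendsto (fun n : ℕ => p n / ((2 - α) * (n : ℝ) ^ (-α))) atTop (nhds 1) := by
  have pant : Antitone p := antitone_nat_of_succ_le hmono
  set β : ℝ := 2 - α with hβdef
  have hβ0 : 0 < β := by rw [hβdef]; linarith
  set S : ℕ → ℝ := fun n => ∑ k ∈ Finset.Icc 1 n, (k:ℝ) * p k with hSdef
  have hSIoc : ∀ n, S n = ∑ k ∈ Finset.Ioc 0 n, (k:ℝ) * p k := by
    intro n; rw [hSdef]; congr 1
  have hdiff : ∀ m n : ℕ, m ≤ n → S n - S m = ∑ k ∈ Finset.Ioc m n, (k:ℝ) * p k := by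
    intro m n h
    rw [hSIoc, hSIoc, ← Finset.sum_Ioc_consecutive _ (Nat.zero_le m) h]; ring
  have hT : ∀ m n : ℕ, m ≤ n →
      (∑ k ∈ Finset.Ioc m n, (k:ℝ)) = ((n:ℝ)*(n+1) - m*(m+1))/2 := by
    intro m n h
    have h2 := Finset.sum_Ioc_consecutive (fun k : ℕ => (k:ℝ)) (Nat.zero_le m) h
    have h3 : (∑ k ∈ Finset.Ioc m n, (k:ℝ)) = (∑ k ∈ Finset.Ioc 0 n, (k:ℝ)) - (∑ k ∈ Finset.Ioc 0 m, (k:ℝ)) := by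
      rw [← h2]; ring
    rw [h3, gauss_Ioc, gauss_Ioc]; ring
  have hlow : ∀ m n : ℕ, m ≤ n → (∑ k ∈ Finset.Ioc m n, (k:ℝ)) * p n ≤ S n - S m := by
    intro m n h; rw [hdiff m n h, Finset.sum_mul]
    apply Finset.sum_le_sum; intro k hk
    exact mul_le_mul_of_nonneg_left (pant (Finset.mem_Ioc.1 hk).2) (Nat.cast_nonneg k)
  have hupp : ∀ m n : ℕ, m ≤ n → S n - S m ≤ (∑ k ∈ Finset.Ioc m n, (k:ℝ)) * p (m+1) := by
    intro m n h; rw [hdiff m n h, Finset.sum_mul]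
    apply Finset.sum_le_sum; intro k hk
    exact mul_le_mul_of_nonneg_left (pant (Finset.mem_Ioc.1 hk).1) (Nat.cast_nonneg k)
  -- floor composition limit for S
  have hBgen : ∀ ρ : ℝ, 0 < ρ →
      Tendsto (fun n : ℕ => S (⌊ρ * n⌋₊) / (n:ℝ)^β) atTop (nhds (ρ^β)) := by
    intro ρ hρ
    have hfl : Tendsto (fun n : ℕ => ⌊ρ * (n:ℝ)⌋₊) atTop atTop :=
      tendsto_nat_floor_mul_atTop ρ hρ
    have h1 : Tendsto (fun n : ℕ => S (⌊ρ * (n:ℝ)⌋₊) / ((⌊ρ*(n:ℝ)⌋₊ : ℝ))^β) atTop (nhds 1) :=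
      hsum.comp hfl
    have hdv : Tendsto (fun n : ℕ => (⌊ρ*(n:ℝ)⌋₊:ℝ)/(n:ℝ)) atTop (nhds ρ) :=
      (tendsto_nat_floor_mul_div_atTop hρ.le).comp tendsto_natCast_atTop_atTop
    have h2 : Tendsto (fun n : ℕ => ((⌊ρ*(n:ℝ)⌋₊:ℝ)/(n:ℝ))^β) atTop (nhds (ρ^β)) :=
      hdv.rpow_const (Or.inl hρ.ne')
    have h3 := h1.mul h2
    rw [one_mul] at h3
    refine h3.congr' ?_
    filter_upwards [hfl.eventually_ge_atTop 1, eventually_ge_atTop 1] with n hm hn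
    have hmpos : (0:ℝ) < (⌊ρ*(n:ℝ)⌋₊:ℝ) := by exact_mod_cast hm
    have hnpos : (0:ℝ) < (n:ℝ) := by exact_mod_cast hn
    have hmb : (0:ℝ) < (⌊ρ*(n:ℝ)⌋₊:ℝ)^β := Real.rpow_pos_of_pos hmpos β
    have hnb : (0:ℝ) < (n:ℝ)^β := Real.rpow_pos_of_pos hnpos β
    show S _ / _ * _ = S _ / _
    rw [Real.div_rpow (le_of_lt hmpos) (le_of_lt hnpos)]
    field_simp
  -- main limit for p n * n^α
  have hg : Tendsto (fun n : ℕ => p n * (n:ℝ)^α) atTop (nhds β) := by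
    rw [tendsto_order]
    constructor
    · -- lower bound: ∀ c < β, eventually c < p n * n^α
      intro c hc
      obtain ⟨σ, hσ1, hσc⟩ : ∃ σ : ℝ, 1 < σ ∧ c < 2*(σ^β-1)/(σ^2-1) := by
        have hsub : Set.Ioi (1:ℝ) ⊆ {(1:ℝ)}ᶜ := fun x hx => ne_of_gt hx
        have h := (tendsto_ratio β).mono_left (nhdsWithin_mono 1 hsub)
        have hev := h.eventually (lt_mem_nhds hc)
        obtain ⟨σ, h2, h1⟩ := (hev.and self_mem_nhdsWithin).exists
        exact ⟨σ, h1, h2⟩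
      have hσ0 : (0:ℝ) < σ := by linarith
      have hd : Tendsto (fun n : ℕ => ((⌊σ*(n:ℝ)⌋₊:ℝ))/(n:ℝ)) atTop (nhds σ) :=
        (tendsto_nat_floor_mul_div_atTop hσ0.le).comp tendsto_natCast_atTop_atTop
      have he : Tendsto (fun n : ℕ => 1/(n:ℝ)) atTop (nhds 0) :=
        tendsto_one_div_atTop_nhds_zero_nat
      -- eventually n < ⌊σ n⌋₊
      have hevN : ∀ᶠ n : ℕ in atTop, n < ⌊σ*(n:ℝ)⌋₊ := by
        have ht : Tendsto (fun n : ℕ => (σ-1)*(n:ℝ)) atTop atTop :=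
          Tendsto.const_mul_atTop (by linarith) tendsto_natCast_atTop_atTop
        filter_upwards [ht.eventually_ge_atTop 1] with n hn
        have : ((n+1:ℕ):ℝ) ≤ σ*(n:ℝ)  := by push_cast; nlinarith
        exact Nat.lt_of_lt_of_le (Nat.lt_succ_self n) (Nat.le_floor this)
      -- limit of T/n^2
      have hC0 : Tendsto (fun n : ℕ =>
          (((⌊σ*(n:ℝ)⌋₊:ℝ)/n)*((⌊σ*(n:ℝ)⌋₊:ℝ)/n + 1/n) - 1*(1+1/n))/2) atTop
          (nhds ((σ*(σ+0) - 1*(1+0))/2)) :=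
        ((hd.mul (hd.add he)).sub ((tendsto_const_nhds (x := (1:ℝ))).mul
          (tendsto_const_nhds.add he))).div_const 2
      have hconst : (σ*(σ+0) - 1*(1+0))/2 = (σ^2-1)/2 := by ring
      rw [hconst] at hC0
      have hC : Tendsto (fun n : ℕ =>
          (∑ k ∈ Finset.Ioc n ⌊σ*(n:ℝ)⌋₊, (k:ℝ)) / (n:ℝ)^2) atTop (nhds ((σ^2-1)/2)) := by
        refine hC0.congr' ?_
        filter_upwards [hevN, eventually_ge_atTop 1] with n hNn hn1
        have hnpos : (0:ℝ) < (n:ℝ) := by exact_mod_cast hn1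
        rw [hT n _ (le_of_lt hNn)]
        field_simp
      have hB := hBgen σ hσ0
      have hdenpos : (0:ℝ) < (σ^2-1)/2 := by nlinarith
      have hden : ((σ:ℝ)^2-1)/2 ≠ 0 := ne_of_gt hdenpos
      have hV := (hB.sub hsum).div hC hden
      have hL : (σ^β - 1)/((σ^2-1)/2) = 2*(σ^β-1)/(σ^2-1) := by
        rw [div_div_eq_mul_div]; ring
      rw [hL] at hV
      have hevV := hV.eventually (lt_mem_nhds hσc)
      filter_upwards [hevV, hevN, eventually_ge_atTop 1] with n hVc hNn hn1
      have hnpos : (0:ℝ) < (n:ℝ) := by exact_mod_cast hn1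
      have hna : (0:ℝ) < (n:ℝ)^α := Real.rpow_pos_of_pos hnpos α
      have hnb : (0:ℝ) < (n:ℝ)^β := Real.rpow_pos_of_pos hnpos β
      have hn2 : (0:ℝ) < (n:ℝ)^2 := by positivity
      have hab : (n:ℝ)^α * (n:ℝ)^β = (n:ℝ)^2 := by
        rw [← Real.rpow_natCast (n:ℝ) 2, ← Real.rpow_add hnpos]
        congr 1
        rw [hβdef]; push_cast; ring
      have hTeq := hT n _ (le_of_lt hNn)
      have hNR : (n:ℝ) < (⌊σ*(n:ℝ)⌋₊:ℝ) := by exact_mod_cast hNn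
      have hTpos : 0 < (∑ k ∈ Finset.Ioc n ⌊σ*(n:ℝ)⌋₊, (k:ℝ)) := by
        rw [hTeq]; nlinarith
      have hup2 : S ⌊σ*(n:ℝ)⌋₊ - S n ≤ (∑ k ∈ Finset.Ioc n ⌊σ*(n:ℝ)⌋₊, (k:ℝ)) * p n :=
        (hupp n _ (le_of_lt hNn)).trans
          (mul_le_mul_of_nonneg_left (hmono n) (le_of_lt hTpos))
      have hgoal : (S ⌊σ*(n:ℝ)⌋₊ / (n:ℝ)^β - S n / (n:ℝ)^β) /
          ((∑ k ∈ Finset.Ioc n ⌊σ*(n:ℝ)⌋₊, (k:ℝ)) / (n:ℝ)^2) ≤ p n * (n:ℝ)^α := by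
        have hTdiv : 0 < (∑ k ∈ Finset.Ioc n ⌊σ*(n:ℝ)⌋₊, (k:ℝ)) / (n:ℝ)^2 :=
          div_pos hTpos hn2
        rw [div_sub_div_same, div_le_iff₀ hTdiv, div_le_iff₀ hnb]
        refine hup2.trans (le_of_eq ?_)
        have hrearr : p n * (n:ℝ)^α * ((∑ k ∈ Finset.Ioc n ⌊σ*(n:ℝ)⌋₊, (k:ℝ)) / (n:ℝ)^2) * (n:ℝ)^β
            = p n * (∑ k ∈ Finset.Ioc n ⌊σ*(n:ℝ)⌋₊, (k:ℝ)) * ((n:ℝ)^α * (n:ℝ)^β) / (n:ℝ)^2 := by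
          ring
        rw [hrearr, hab, mul_div_assoc, div_self (ne_of_gt hn2), mul_one, mul_comm]
      exact lt_of_lt_of_le hVc hgoal
    · -- upper bound: ∀ c > β, eventually p n * n^α < c
      intro c hc
      obtain ⟨θ, hθc, hθ0, hθ1'⟩ : ∃ θ : ℝ, 2*(θ^β-1)/(θ^2-1) < c ∧ 0 < θ ∧ θ ∈ Set.Iio 1 := by
        have hsub : Set.Iio (1:ℝ) ⊆ {(1:ℝ)}ᶜ := fun x hx => ne_of_lt hx
        have h := (tendsto_ratio β).mono_left (nhdsWithin_mono 1 hsub)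
        have hev := h.eventually (gt_mem_nhds hc)
        have hpos : {θ : ℝ | 0 < θ} ∈ nhdsWithin 1 (Set.Iio 1) :=
          nhdsWithin_le_nhds (lt_mem_nhds one_pos)
        obtain ⟨θ, ⟨h1, h2⟩, h3⟩ := ((hev.and hpos).and self_mem_nhdsWithin).exists
        exact ⟨θ, h1, h2, h3⟩
      have hθ1 : θ < 1 := hθ1'
      have hd : Tendsto (fun n : ℕ => ((⌊θ*(n:ℝ)⌋₊:ℝ))/(n:ℝ)) atTop (nhds θ) :=
        (tendsto_nat_floor_mul_div_atTop hθ0.le).comp tendsto_natCast_atTop_atTop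
      have he : Tendsto (fun n : ℕ => 1/(n:ℝ)) atTop (nhds 0) :=
        tendsto_one_div_atTop_nhds_zero_nat
      have hevM : ∀ᶠ n : ℕ in atTop, ⌊θ*(n:ℝ)⌋₊ < n := by
        filter_upwards [eventually_ge_atTop 1] with n hn
        have hnpos : (0:ℝ) < (n:ℝ) := by exact_mod_cast hn
        rw [Nat.floor_lt (by positivity)]
        nlinarith
      have hC0 : Tendsto (fun n : ℕ =>
          (1*(1+1/(n:ℝ)) - ((⌊θ*(n:ℝ)⌋₊:ℝ)/n)*((⌊θ*(n:ℝ)⌋₊:ℝ)/n + 1/n))/2) atTop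
          (nhds ((1*(1+0) - θ*(θ+0))/2)) :=
        (((tendsto_const_nhds (x := (1:ℝ))).mul (tendsto_const_nhds.add he)).sub
          (hd.mul (hd.add he))).div_const 2
      have hconst : ((1:ℝ)*(1+0) - θ*(θ+0))/2 = (1-θ^2)/2 := by ring
      rw [hconst] at hC0
      have hC : Tendsto (fun n : ℕ =>
          (∑ k ∈ Finset.Ioc ⌊θ*(n:ℝ)⌋₊ n, (k:ℝ)) / (n:ℝ)^2) atTop (nhds ((1-θ^2)/2)) := by
        refine hC0.congr' ?_
        filter_upwards [hevM, eventually_ge_atTop 1] with n hMn hn1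
        have hnpos : (0:ℝ) < (n:ℝ) := by exact_mod_cast hn1
        rw [hT _ n (le_of_lt hMn)]
        field_simp
      have hB := hBgen θ hθ0
      have hdenpos : (0:ℝ) < (1-θ^2)/2 := by nlinarith
      have hden : ((1:ℝ)-θ^2)/2 ≠ 0 := ne_of_gt hdenpos
      have hV := (hsum.sub hB).div hC hden
      have hL : ((1:ℝ) - θ^β)/((1-θ^2)/2) = 2*(θ^β-1)/(θ^2-1) := by
        rw [div_div_eq_mul_div, show ((1:ℝ)-θ^β)*2 = -(2*(θ^β-1)) by ring,
          show (1:ℝ)-θ^2 = -(θ^2-1) by ring, neg_div_neg_eq]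
      rw [hL] at hV
      have hevV := hV.eventually (gt_mem_nhds hθc)
      filter_upwards [hevV, hevM, eventually_ge_atTop 1] with n hVc hMn hn1
      have hnpos : (0:ℝ) < (n:ℝ) := by exact_mod_cast hn1
      have hna : (0:ℝ) < (n:ℝ)^α := Real.rpow_pos_of_pos hnpos α
      have hnb : (0:ℝ) < (n:ℝ)^β := Real.rpow_pos_of_pos hnpos β
      have hn2 : (0:ℝ) < (n:ℝ)^2 := by positivity
      have hab : (n:ℝ)^α * (n:ℝ)^β = (n:ℝ)^2 := by
        rw [← Real.rpow_natCast (n:ℝ) 2, ← Real.rpow_add hnpos]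
        congr 1
        rw [hβdef]; push_cast; ring
      have hTeq := hT _ n (le_of_lt hMn)
      have hMR : ((⌊θ*(n:ℝ)⌋₊:ℝ)) < (n:ℝ) := by exact_mod_cast hMn
      have hTpos : 0 < (∑ k ∈ Finset.Ioc ⌊θ*(n:ℝ)⌋₊ n, (k:ℝ)) := by
        rw [hTeq]; nlinarith
      have hlow2 : (∑ k ∈ Finset.Ioc ⌊θ*(n:ℝ)⌋₊ n, (k:ℝ)) * p n ≤ S n - S ⌊θ*(n:ℝ)⌋₊ :=
        hlow _ n (le_of_lt hMn)
      have hgoal : p n * (n:ℝ)^α ≤ (S n / (n:ℝ)^β - S ⌊θ*(n:ℝ)⌋₊ / (n:ℝ)^β) /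
          ((∑ k ∈ Finset.Ioc ⌊θ*(n:ℝ)⌋₊ n, (k:ℝ)) / (n:ℝ)^2) := by
        have hTdiv : 0 < (∑ k ∈ Finset.Ioc ⌊θ*(n:ℝ)⌋₊ n, (k:ℝ)) / (n:ℝ)^2 :=
          div_pos hTpos hn2
        rw [div_sub_div_same, le_div_iff₀ hTdiv, le_div_iff₀ hnb]
        refine le_trans (le_of_eq ?_) hlow2
        have hrearr : p n * (n:ℝ)^α * ((∑ k ∈ Finset.Ioc ⌊θ*(n:ℝ)⌋₊ n, (k:ℝ)) / (n:ℝ)^2) * (n:ℝ)^β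
            = p n * (∑ k ∈ Finset.Ioc ⌊θ*(n:ℝ)⌋₊ n, (k:ℝ)) * ((n:ℝ)^α * (n:ℝ)^β) / (n:ℝ)^2 := by
          ring
        rw [hrearr, hab, mul_div_assoc, div_self (ne_of_gt hn2), mul_one, mul_comm]
      exact lt_of_le_of_lt hgoal hVc
  -- conclude
  have hβne : β ≠ 0 := ne_of_gt hβ0
  have h4 : Tendsto (fun n : ℕ => p n * (n:ℝ)^α / β) atTop (nhds (β / β)) := hg.div_const β
  rw [div_self hβne] at h4
  refine h4.congr' ?_
  filter_upwards [eventually_ge_atTop 1] with n hn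
  have hnpos : (0:ℝ) < (n:ℝ) := by exact_mod_cast hn
  have hna : (0:ℝ) < (n:ℝ)^α := Real.rpow_pos_of_pos hnpos α
  rw [Real.rpow_neg (le_of_lt hnpos)]
  field_simp
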